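/- Let Â = C[[x_1, …, x_N]] be a formal power series algebra with a continuous Poisson bracket, and suppose f, g ∈ Â·M are elements of the maximal ideal generated by the x_i with {f, g} = 1 + t for some t in the maximal ideal M. Then there exists g' ∈ Â·M² such that {f, g + g'} = 1. -/

import Mathlib

/-!
STATEMENT 9: Let `Â = ℂ[[x₁,…,x_N]]` be a formal power series algebra with a
continuous Poisson bracket, and let `f, g ∈ M` (the maximal ideal generated by
the `xᵢ`) satisfy `{f,g} = 1 + t` with `t ∈ M`.  Then there exists `g' ∈ M²`
with `{f, g + g'} = 1`.
-/

namespace Stmt9Aux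

open MvPowerSeries Finsupp Finset

lemma degree_add' {σ : Type*} (p q : σ →₀ ℕ) :
    Finsupp.degree (p + q) = p.degree + q.degree := by
  simp [degree_eq_weight_one, map_add]

lemma degree_single' {σ : Type*} (i : σ) : Finsupp.degree (Finsupp.single i 1) = 1 := by
  classical
  exact Finsupp.degree_single i 1

variable {N : ℕ}

/-- The ideal of power series with vanishing coefficients below degree `n`. -/
noncomputable def J (N n : ℕ) : Ideal (MvPowerSeries (Fin N) ℂ) where
  carrier := {a | ∀ d : Fin N →₀ ℕ, d.degree < n → MvPowerSeries.coeff (R := ℂ) d a = 0}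
  add_mem' := by
    intro a b ha hb d hd
    rw [Set.mem_setOf_eq] at *
    rw [map_add, ha d hd, hb d hd, add_zero]
  zero_mem' := by intro d hd; simp
  smul_mem' := by
    intro r a ha d hd
    rw [Set.mem_setOf_eq] at *
    rw [smul_eq_mul, MvPowerSeries.coeff_mul]
    apply Finset.sum_eq_zero
    rintro ⟨p, q⟩ hpq
    rw [Finset.HasAntidiagonal.mem_antidiagonal] at hpq
    have hq : q.degree < n := by
      have : p.degree + q.degree = d.degree := by rw [← degree_add', hpq]
      omega
    rw [ha q hq, mul_zero]

lemma mem_J_iff {n : ℕ} {a : MvPowerSeries (Fin N) ℂ} :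
    a ∈ J N n ↔ ∀ d : Fin N →₀ ℕ, d.degree < n → MvPowerSeries.coeff (R := ℂ) d a = 0 := Iff.rfl

lemma X_mem_J (i : Fin N) : (X i : MvPowerSeries (Fin N) ℂ) ∈ J N 1 := by
  rw [mem_J_iff]
  intro d hd
  have : d = 0 := by
    have := Nat.lt_one_iff.mp hd
    rwa [degree_eq_zero_iff] at this
  subst this
  simpa using MvPowerSeries.constantCoeff_X (R := ℂ) i

lemma span_X_pow_le_J (n : ℕ) :
    (Ideal.span (Set.range (X : Fin N → MvPowerSeries (Fin N) ℂ))) ^ n ≤ J N n := by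
  induction n with
  | zero => intro a _; rw [mem_J_iff]; intro d hd; exact absurd hd (Nat.not_lt_zero _)
  | succ n ih =>
    rw [pow_succ]
    rw [Ideal.mul_le]
    intro a ha b hb
    have hbJ : b ∈ J N 1 := by
      refine Ideal.span_le.mpr ?_ hb
      rintro x ⟨i, rfl⟩
      exact X_mem_J i
    rw [mem_J_iff]
    intro d hd
    rw [MvPowerSeries.coeff_mul]
    apply Finset.sum_eq_zero
    rintro ⟨p, q⟩ hpq
    rw [Finset.HasAntidiagonal.mem_antidiagonal] at hpq
    have hdeg : p.degree + q.degree = d.degree := by rw [← degree_add', hpq]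
    by_cases hp : p.degree < n
    · rw [ih ha p hp, zero_mul]
    · have hq : q.degree < 1 := by omega
      rw [hbJ q hq, mul_zero]

/-- Split off the variable `i` from all monomials whose least variable is `i`. -/
noncomputable def Tsplit (i : Fin N) (a : MvPowerSeries (Fin N) ℂ) : MvPowerSeries (Fin N) ℂ :=
  fun d : Fin N →₀ ℕ =>
    if ∀ j, j < i → (d + Finsupp.single i 1 : Fin N →₀ ℕ) j = 0
    then MvPowerSeries.coeff (R := ℂ) (d + Finsupp.single i 1) a else 0

lemma coeff_X_mul_Tsplit (i : Fin N) (a : MvPowerSeries (Fin N) ℂ) (d : Fin N →₀ ℕ) :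
    MvPowerSeries.coeff (R := ℂ) d (X i * Tsplit i a) =
      if (d i ≠ 0 ∧ ∀ j, j < i → d j = 0) then MvPowerSeries.coeff (R := ℂ) d a else 0 := by
  rw [X_def, coeff_monomial_mul, one_mul]
  by_cases hle : Finsupp.single i 1 ≤ d
  · rw [if_pos hle]
    have hsub : d - Finsupp.single i 1 + Finsupp.single i 1 = d :=
      tsub_add_cancel_of_le hle
    have hdi : d i ≠ 0 := by
      have := (Finsupp.single_le_iff).mp hle
      omega
    rw [MvPowerSeries.coeff_apply, Tsplit, hsub]
    by_cases hcond : ∀ j, j < i → d j = 0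
    · rw [if_pos hcond, if_pos ⟨hdi, hcond⟩, MvPowerSeries.coeff_apply]
    · rw [if_neg hcond, if_neg (by tauto)]
  · rw [if_neg hle]
    have hdi : d i = 0 := by
      by_contra h
      exact hle (Finsupp.single_le_iff.mpr (by omega))
    rw [if_neg (by tauto)]

lemma split_eq (a : MvPowerSeries (Fin N) ℂ) (ha : MvPowerSeries.coeff (R := ℂ) 0 a = 0) :
    a = ∑ i : Fin N, X i * Tsplit i a := by
  ext d
  rw [map_sum]
  by_cases hd : d = 0
  · subst hd
    rw [ha]
    symm
    apply Finset.sum_eq_zero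
    intro i _
    rw [coeff_X_mul_Tsplit]
    simp
  · have hsupp : d.support.Nonempty := by
      rw [Finsupp.support_nonempty_iff]; exact hd
    set i₀ := d.support.min' hsupp with hi₀
    have hi₀mem : i₀ ∈ d.support := d.support.min'_mem hsupp
    have hi₀ne : d i₀ ≠ 0 := Finsupp.mem_support_iff.mp hi₀mem
    have hi₀least : ∀ j, j < i₀ → d j = 0 := by
      intro j hj
      by_contra h
      exact absurd (d.support.min'_le j (Finsupp.mem_support_iff.mpr h)) (not_le.mpr hj)
    rw [Finset.sum_eq_single i₀]
    · rw [coeff_X_mul_Tsplit, if_pos ⟨hi₀ne, hi₀least⟩]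
    · intro i _ hne
      rw [coeff_X_mul_Tsplit, if_neg]
      rintro ⟨hdi, hleast⟩
      rcases lt_trichotomy i i₀ with h | h | h
      · exact hdi (hi₀least i h)
      · exact hne h
      · exact hi₀ne (hleast i₀ h)
    · intro h
      exact absurd (Finset.mem_univ i₀) h

lemma Tsplit_mem_J {n : ℕ} (i : Fin N) {a : MvPowerSeries (Fin N) ℂ}
    (ha : a ∈ J N (n + 1)) : Tsplit i a ∈ J N n := by
  rw [mem_J_iff]
  intro d hd
  rw [MvPowerSeries.coeff_apply, Tsplit]
  by_cases hcond : ∀ j, j < i → (d + Finsupp.single i 1 : Fin N →₀ ℕ) j = 0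
  · rw [if_pos hcond]
    apply ha
    rw [degree_add', degree_single']
    omega
  · rw [if_neg hcond]

lemma J_le_span_pow (n : ℕ) :
    J N n ≤ (Ideal.span (Set.range (X : Fin N → MvPowerSeries (Fin N) ℂ))) ^ n := by
  induction n with
  | zero => intro a _; simp
  | succ n ih =>
    intro a ha
    have ha0 : MvPowerSeries.coeff (R := ℂ) 0 a = 0 := by
      apply ha
      simp
    rw [split_eq a ha0]
    apply Ideal.sum_mem
    intro i _
    rw [pow_succ']
    exact Ideal.mul_mem_mul (Ideal.subset_span ⟨i, rfl⟩) (ih (Tsplit_mem_J i ha))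

/-- The coefficient characterization of powers of the maximal ideal. -/
lemma mem_span_pow_iff {n : ℕ} {a : MvPowerSeries (Fin N) ℂ} :
    a ∈ (Ideal.span (Set.range (X : Fin N → MvPowerSeries (Fin N) ℂ))) ^ n ↔
      ∀ d : Fin N →₀ ℕ, d.degree < n → MvPowerSeries.coeff (R := ℂ) d a = 0 :=
  ⟨fun h => span_X_pow_le_J n h, fun h => J_le_span_pow n h⟩

/-- `(-1)^i / i!`. -/
noncomputable def cc (i : ℕ) : ℂ := (-1) ^ i / (i.factorial : ℂ)

@[simp] lemma cc_zero : cc 0 = 1 := by simp [cc]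

lemma cc_eq (j : ℕ) : cc j = -(cc (j + 1) * ((j : ℂ) + 1)) := by
  have h1 : ((j.factorial : ℂ)) ≠ 0 := Nat.cast_ne_zero.mpr (Nat.factorial_ne_zero j)
  have h2 : ((j : ℂ) + 1) ≠ 0 := Nat.cast_add_one_ne_zero j
  rw [cc, cc, Nat.factorial_succ]
  push_cast
  field_simp
  ring

lemma pow_rule (D : MvPowerSeries (Fin N) ℂ →ₗ[ℂ] MvPowerSeries (Fin N) ℂ)
    (hmul : ∀ a b, D (a * b) = D a * b + a * D b)
    (γ : MvPowerSeries (Fin N) ℂ) (n : ℕ) :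
    D (γ ^ (n + 1)) = ((n : ℂ) + 1) • (γ ^ n * D γ) := by
  induction n with
  | zero => simp [Algebra.smul_def]
  | succ n ih =>
    have h : γ ^ (n + 2) = γ * γ ^ (n + 1) := by ring
    rw [h, hmul, ih]
    simp only [Algebra.smul_def, map_add, map_natCast, map_one]
    push_cast
    ring

/-- The key telescoping step. -/
lemma keystep (D : MvPowerSeries (Fin N) ℂ →ₗ[ℂ] MvPowerSeries (Fin N) ℂ)
    (hmul : ∀ a b, D (a * b) = D a * b + a * D b)
    (γ τ : MvPowerSeries (Fin N) ℂ) (hγ : D γ = 1 + τ) (j : ℕ) :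
    D (cc (j + 1) • (γ ^ (j + 1) * (fun x => D x)^[j] τ)) =
      cc (j + 1) • (γ ^ (j + 1) * (fun x => D x)^[j + 1] τ) -
      (1 + τ) * (cc j • (γ ^ j * (fun x => D x)^[j] τ)) := by
  have hit : D ((fun x => D x)^[j] τ) = (fun x => D x)^[j + 1] τ := by
    rw [Function.iterate_succ_apply']
  rw [map_smul, hmul, pow_rule D hmul, hγ, hit]
  rw [cc_eq j]
  simp only [Algebra.smul_def, map_add, map_natCast, map_one, map_neg, map_mul]
  ring

/-- The Newton iteration sequence. -/
noncomputable def gseq {N : ℕ} (D : MvPowerSeries (Fin N) ℂ → MvPowerSeries (Fin N) ℂ)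
    (g : MvPowerSeries (Fin N) ℂ) : ℕ → MvPowerSeries (Fin N) ℂ
  | 0 => g
  | m + 1 => gseq D g m + ∑ j ∈ Finset.range (m + 2),
      cc (j + 1) • ((gseq D g m) ^ (j + 1) * D^[j] (D (gseq D g m) - 1))

end Stmt9Aux

theorem stmt9 (N : ℕ)
    -- the Poisson bracket on Â = ℂ[[x₁,…,x_N]]
    (P : MvPowerSeries (Fin N) ℂ →ₗ[ℂ] MvPowerSeries (Fin N) ℂ →ₗ[ℂ] MvPowerSeries (Fin N) ℂ)
    -- Lie algebra axioms
    (hskew : ∀ a b, P a b = -P b a)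
    (hjac : ∀ a b c, P a (P b c) = P (P a b) c + P b (P a c))
    -- Leibniz rule
    (hleib : ∀ a b c, P a (b * c) = P a b * c + b * P a c)
    -- continuity with respect to the M-adic topology, where M is the maximal
    -- ideal generated by the variables
    (M : Ideal (MvPowerSeries (Fin N) ℂ))
    (hM : M = Ideal.span (Set.range (MvPowerSeries.X : Fin N → MvPowerSeries (Fin N) ℂ)))
    (hcont : ∀ n : ℕ, ∃ k : ℕ, ∀ a b, a ∈ M ^ k → P a b ∈ M ^ n ∧ P b a ∈ M ^ n)
    -- the elements f, g and the hypothesis {f,g} = 1 + t, t ∈ M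
    (f g t : MvPowerSeries (Fin N) ℂ)
    (hf : f ∈ M) (hg : g ∈ M) (ht : t ∈ M)
    (hfg : P f g = 1 + t) :
    ∃ g' ∈ M ^ 2, P f (g + g') = 1 := by
  classical
  have hDmul : ∀ a b, P f (a * b) = P f a * b + a * P f b := hleib f
  -- coefficient characterization of powers of M
  have hchar : ∀ (n : ℕ) (a : MvPowerSeries (Fin N) ℂ), a ∈ M ^ n ↔
      ∀ d : Fin N →₀ ℕ, d.degree < n → MvPowerSeries.coeff (R := ℂ) d a = 0 := by
    intro n a; rw [hM]; exact Stmt9Aux.mem_span_pow_iff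
  -- continuity of the derivation D = P f
  have hDcont : ∀ n : ℕ, ∃ k : ℕ, ∀ a, a ∈ M ^ k → P f a ∈ M ^ n := by
    intro n; obtain ⟨k, hk⟩ := hcont n; exact ⟨k, fun a ha => (hk a f ha).2⟩
  choose K hK using hDcont
  have hKiter : ∀ (j n : ℕ) (a : MvPowerSeries (Fin N) ℂ),
      a ∈ M ^ (K^[j] n) → (fun x => P f x)^[j] a ∈ M ^ n := by
    intro j
    induction j with
    | zero => intro n a ha; simpa using ha
    | succ j ih =>
      intro n a ha
      rw [Function.iterate_succ_apply']
      apply hK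
      apply ih
      rwa [← Function.iterate_succ_apply]
  -- membership helpers
  have hsmul_mem : ∀ (I : Ideal (MvPowerSeries (Fin N) ℂ)) (c : ℂ) a, a ∈ I → c • a ∈ I := by
    intro I c a ha; rw [Algebra.smul_def]; exact I.mul_mem_left _ ha
  -- the iteration
  set γ : ℕ → MvPowerSeries (Fin N) ℂ := Stmt9Aux.gseq (fun x => P f x) g with hγdef
  set τ : ℕ → MvPowerSeries (Fin N) ℂ := fun m => P f (γ m) - 1 with hτdef
  set v : ℕ → ℕ → MvPowerSeries (Fin N) ℂ :=
    fun m j => Stmt9Aux.cc j • ((γ m) ^ j * (fun x => P f x)^[j] (τ m)) with hvdef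
  set u : ℕ → MvPowerSeries (Fin N) ℂ :=
    fun m => ∑ j ∈ Finset.range (m + 2),
      Stmt9Aux.cc (j + 1) • ((γ m) ^ (j + 1) * (fun x => P f x)^[j] (τ m)) with hudef
  have hγ0 : γ 0 = g := rfl
  have hγs : ∀ m, γ (m + 1) = γ m + u m := fun m => rfl
  have hτ0 : τ 0 = t := by
    rw [hτdef]
    show P f (γ 0) - 1 = t
    rw [hγ0, hfg]; ring
  have hτeq : ∀ m, P f (γ m) = 1 + τ m := by
    intro m; rw [hτdef]; ring
  have hv0 : ∀ m, v m 0 = τ m := by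
    intro m; rw [hvdef]; simp
  -- the step identity
  have hstep : ∀ m, τ (m + 1) =
      v m (m + 2) - τ m * (∑ j ∈ Finset.range (m + 2), v m j) := by
    intro m
    have hDu : P f (u m) = v m (m + 2) - v m 0
        - τ m * (∑ j ∈ Finset.range (m + 2), v m j) := by
      rw [hudef]
      rw [map_sum]
      have hterm : ∀ j ∈ Finset.range (m + 2),
          P f (Stmt9Aux.cc (j + 1) • ((γ m) ^ (j + 1) * (fun x => P f x)^[j] (τ m)))
          = (v m (j + 1) - v m j) - τ m * v m j := by
        intro j _
        rw [Stmt9Aux.keystep (P f) hDmul (γ m) (τ m) (hτeq m) j, hvdef]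
        ring
      rw [Finset.sum_congr rfl hterm]
      rw [Finset.sum_sub_distrib, Finset.sum_range_sub (fun j => v m j), ← Finset.mul_sum]
    have : τ (m + 1) = τ m + P f (u m) := by
      rw [hτdef]
      show P f (γ (m + 1)) - 1 = (P f (γ m) - 1) + P f (u m)
      rw [hγs m, map_add]; ring
    rw [this, hDu, hv0]
    ring
  -- the fundamental invariant
  have hinv : ∀ m, γ m ∈ M ∧ (γ m - g) ∈ M ^ 2 ∧ τ m ∈ M ^ (m + 1) := by
    intro m
    induction m with
    | zero =>
      refine ⟨hg, by rw [hγ0]; simp, ?_⟩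
      rw [hτ0, pow_one]; exact ht
    | succ m ih =>
      obtain ⟨hγM, hγg, hτM⟩ := ih
      have hτM1 : τ m ∈ M := by
        have := Ideal.pow_le_pow_right (show 1 ≤ m + 1 by omega) hτM
        rwa [pow_one] at this
      -- each v m j is in M
      have hvM : ∀ j, v m j ∈ M := by
        intro j
        rw [hvdef]
        apply hsmul_mem
        cases j with
        | zero => simpa using hτM1
        | succ j =>
          apply Ideal.mul_mem_right
          have := Ideal.pow_mem_pow hγM (j + 1)
          have h2 := Ideal.pow_le_pow_right (show 1 ≤ j + 1 by omega) this
          rwa [pow_one] at h2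
      -- u m ∈ M ^ 2
      have huM : u m ∈ M ^ 2 := by
        rw [hudef]
        apply Ideal.sum_mem
        intro j _
        apply hsmul_mem
        cases j with
        | zero =>
          have : (γ m) ^ (0 + 1) * (fun x => P f x)^[0] (τ m) = γ m * τ m := by
            simp
          rw [this, pow_two]
          exact Ideal.mul_mem_mul hγM hτM1
        | succ j =>
          apply Ideal.mul_mem_right
          exact Ideal.pow_le_pow_right (show 2 ≤ j + 2 by omega) (Ideal.pow_mem_pow hγM (j + 2))
      refine ⟨?_, ?_, ?_⟩
      · rw [hγs m]
        have h1 : u m ∈ M := by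
          have := Ideal.pow_le_pow_right (show 1 ≤ 2 by omega) huM
          rwa [pow_one] at this
        exact Ideal.add_mem M hγM h1
      · have : γ (m + 1) - g = (γ m - g) + u m := by rw [hγs m]; ring
        rw [this]
        exact Ideal.add_mem _ hγg huM
      · rw [hstep m]
        apply Ideal.sub_mem
        · rw [hvdef]
          apply hsmul_mem
          apply Ideal.mul_mem_right
          exact Ideal.pow_mem_pow hγM (m + 2)
        · rw [pow_succ]
          exact Ideal.mul_mem_mul hτM (Ideal.sum_mem M (fun j _ => hvM j))
  -- u m is eventually in every power of M
  have hudeep : ∀ b : ℕ, ∃ m₀ : ℕ, ∀ m, m₀ ≤ m → u m ∈ M ^ b := by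
    intro b
    refine ⟨(Finset.range b).sup (fun j => K^[j] b), ?_⟩
    intro m hm
    rw [hudef]
    apply Ideal.sum_mem
    intro j _
    apply hsmul_mem
    by_cases hj : b ≤ j + 1
    · apply Ideal.mul_mem_right
      exact Ideal.pow_le_pow_right hj (Ideal.pow_mem_pow (hinv m).1 (j + 1))
    · apply Ideal.mul_mem_left
      apply hKiter j b
      have hjb : j ∈ Finset.range b := Finset.mem_range.mpr (by omega)
      have h1 : K^[j] b ≤ m + 1 := by
        have h2 : K^[j] b ≤ (Finset.range b).sup (fun j => K^[j] b) :=
          Finset.le_sup (f := fun j => K^[j] b) hjb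
        omega
      exact Ideal.pow_le_pow_right h1 (hinv m).2.2
  choose μ hμ using hudeep
  -- partial differences
  have hdiff : ∀ b m m', μ b ≤ m → m ≤ m' → γ m' - γ m ∈ M ^ b := by
    intro b m m' hm hmm'
    induction m', hmm' using Nat.le_induction with
    | base => simpa using Ideal.zero_mem (M ^ b)
    | succ m' hmm' ih =>
      have : γ (m' + 1) - γ m = u m' + (γ m' - γ m) := by rw [hγs m']; ring
      rw [this]
      exact Ideal.add_mem _ (hμ b m' (le_trans hm hmm')) ih
  -- the limit
  set L : MvPowerSeries (Fin N) ℂ :=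
    (fun d : Fin N →₀ ℕ => MvPowerSeries.coeff (R := ℂ) d (γ (μ (d.degree + 1)))) with hLdef
  have hcoeffL : ∀ d : Fin N →₀ ℕ,
      MvPowerSeries.coeff (R := ℂ) d L = MvPowerSeries.coeff (R := ℂ) d (γ (μ (d.degree + 1))) :=
    fun d => rfl
  have hLdiff : ∀ b m, μ b ≤ m → L - γ m ∈ M ^ b := by
    intro b m hm
    rw [hchar]
    intro d hd
    rw [map_sub, hcoeffL]
    set m' := max m (μ (d.degree + 1)) with hm'
    have h1 : MvPowerSeries.coeff (R := ℂ) d (γ m') = MvPowerSeries.coeff (R := ℂ) d (γ (μ (d.degree + 1))) := by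
      have hmem := hdiff (d.degree + 1) (μ (d.degree + 1)) m' le_rfl (le_max_right _ _)
      have := (hchar _ _).mp hmem d (by omega)
      rw [map_sub, sub_eq_zero] at this
      exact this
    have h2 : MvPowerSeries.coeff (R := ℂ) d (γ m') = MvPowerSeries.coeff (R := ℂ) d (γ m) := by
      have hmem := hdiff b m m' hm (le_max_left _ _)
      have := (hchar _ _).mp hmem d hd
      rw [map_sub, sub_eq_zero] at this
      exact this
    rw [← h1, h2, sub_self]
  -- the limit satisfies P f L = 1
  have hfinal : ∀ n : ℕ, P f L - 1 ∈ M ^ n := by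
    intro n
    set m := max (μ (K n)) n with hm
    have h1 : L - γ m ∈ M ^ (K n) := hLdiff (K n) m (le_max_left _ _)
    have h2 : P f (L - γ m) ∈ M ^ n := hK n _ h1
    have h3 : τ m ∈ M ^ n :=
      Ideal.pow_le_pow_right (show n ≤ m + 1 by omega) (hinv m).2.2
    have heq : P f L - 1 = P f (L - γ m) + τ m := by
      rw [map_sub, hτdef]
      ring
    rw [heq]
    exact Ideal.add_mem _ h2 h3
  have hL1 : P f L = 1 := by
    rw [← sub_eq_zero]
    apply MvPowerSeries.ext
    intro d
    rw [map_zero]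
    exact (hchar (d.degree + 1) _).mp (hfinal (d.degree + 1)) d (by omega)
  refine ⟨L - g, ?_, ?_⟩
  · have h1 := hLdiff 2 (μ 2) le_rfl
    have h2 := (hinv (μ 2)).2.1
    have : L - g = (L - γ (μ 2)) + (γ (μ 2) - g) := by ring
    rw [this]
    exact Ideal.add_mem _ h1 h2
  · rw [show g + (L - g) = L by ring]
    exact hL1
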